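/- Every k-burning maximal spider graph G has burning number exactly k. -/

import Mathlib

/-- The set of burned vertices after `t` rounds, given fire sources `x`. -/
def burnedSet {V : Type*} (G : SimpleGraph V) {k : ℕ} (x : Fin k → V) : ℕ → Set V
  | 0 => ∅
  | t + 1 =>
      burnedSet G x t ∪ {v | ∃ u ∈ burnedSet G x t, G.Adj u v} ∪
        {v | ∃ h : t < k, v = x ⟨t, h⟩}

/-- `x` is a burning sequence: each source is unburned when chosen, and after
round `k` every vertex is burned. -/
def IsBurningSeq {V : Type*} (G : SimpleGraph V) {k : ℕ} (x : Fin k → V) : Prop :=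
  (∀ i : Fin k, x i ∉ burnedSet G x i) ∧ burnedSet G x k = Set.univ

/-- The burning number: the least length of a burning sequence. -/
noncomputable def burningNumber {V : Type*} (G : SimpleGraph V) : ℕ :=
  sInf {k | ∃ x : Fin k → V, IsBurningSeq G x}

open SimpleGraph Walk

set_option linter.unusedSectionVars false
set_option maxHeartbeats 1000000

section Aux
variable {V : Type*} [Fintype V] {G : SimpleGraph V} {s : V}

/-- In a connected acyclic graph, every path realizes the distance. -/
private lemma bn_path_length (hconn : G.Connected) (hacyclic : G.IsAcyclic)
    {u v : V} {p : G.Walk u v} (hp : p.IsPath) : p.length = G.dist u v := by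
  classical
  obtain ⟨q, hq, hql⟩ := hconn.exists_path_of_dist u v
  have h := hacyclic.path_unique (⟨p, hp⟩ : G.Path u v) ⟨q, hq⟩
  rw [Subtype.ext_iff] at h
  simp only at h
  rw [h, hql]

/-- Adjacent vertices have different distances to `s`. -/
private lemma bn_adj_dist_ne (hconn : G.Connected) (hacyclic : G.IsAcyclic)
    {a b : V} (hab : G.Adj a b) : G.dist s a ≠ G.dist s b := by
  classical
  intro hd
  obtain ⟨p, hp, hpl⟩ := hconn.exists_path_of_dist s a
  by_cases hb : b ∈ p.support
  · have h1 : G.dist s b ≤ (p.takeUntil b hb).length := dist_le _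
    have h2 : (p.takeUntil b hb).length + (p.dropUntil b hb).length = p.length := by
      rw [← Walk.length_append, Walk.take_spec]
    have h3 : (p.dropUntil b hb).length = 0 := by omega
    exact hab.ne (Walk.eq_of_length_eq_zero h3).symm
  · have hcp : (p.concat hab).IsPath := by
      rw [← Walk.isPath_reverse_iff, Walk.reverse_concat, Walk.cons_isPath_iff]
      refine ⟨hp.reverse, ?_⟩
      rwa [Walk.support_reverse, List.mem_reverse]
    have := bn_path_length hconn hacyclic hcp
    rw [Walk.length_concat, hpl, hd] at this
    omega

private lemma bn_adj_dist_cases (hconn : G.Connected) (hacyclic : G.IsAcyclic)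
    {a b : V} (hab : G.Adj a b) :
    G.dist s b = G.dist s a + 1 ∨ G.dist s a = G.dist s b + 1 := by
  have h1 : G.dist s b ≤ G.dist s a + 1 := by
    have := hconn.dist_triangle (u := s) (v := a) (w := b)
    rwa [(dist_eq_one_iff_adj).mpr hab] at this
  have h2 : G.dist s a ≤ G.dist s b + 1 := by
    have := hconn.dist_triangle (u := s) (v := b) (w := a)
    rwa [(dist_eq_one_iff_adj).mpr hab.symm] at this
  have h3 := bn_adj_dist_ne hconn hacyclic (s := s) hab
  omega

/-- Every vertex at positive distance from `s` has a neighbor one step closer. -/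
private lemma bn_down_neighbor (hconn : G.Connected) {w : V} (hw : 1 ≤ G.dist s w) :
    ∃ z, G.Adj w z ∧ G.dist s z + 1 = G.dist s w := by
  obtain ⟨q, hql⟩ := hconn.exists_walk_length_eq_dist w s
  cases q with
  | nil => simp [SimpleGraph.dist_self] at hw
  | cons h q' =>
    rename_i z
    refine ⟨z, h, ?_⟩
    have h1 : G.dist s z ≤ q'.length := by
      rw [dist_comm]; exact dist_le q'
    have h2 : G.dist s w ≤ G.dist s z + 1 := by
      have := hconn.dist_triangle (u := s) (v := z) (w := w)
      rwa [(dist_eq_one_iff_adj).mpr h.symm] at this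
    have h3 : q'.length + 1 = G.dist s w := by
      rw [dist_comm]; simpa using hql
    omega

/-- The neighbor one step closer to `s` is unique (tree). -/
private lemma bn_down_unique (hconn : G.Connected) (hacyclic : G.IsAcyclic)
    {w x y : V} (hx : G.Adj w x) (hy : G.Adj w y)
    (hdx : G.dist s x + 1 = G.dist s w) (hdy : G.dist s y + 1 = G.dist s w) : x = y := by
  classical
  obtain ⟨px, hpx, hpxl⟩ := hconn.exists_path_of_dist s x
  obtain ⟨py, hpy, hpyl⟩ := hconn.exists_path_of_dist s y
  have hwx : w ∉ px.support := by
    intro hmem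
    have h1 : G.dist s w ≤ (px.takeUntil w hmem).length := dist_le _
    have h2 := Walk.length_takeUntil_le px hmem
    omega
  have hwy : w ∉ py.support := by
    intro hmem
    have h1 : G.dist s w ≤ (py.takeUntil w hmem).length := dist_le _
    have h2 := Walk.length_takeUntil_le py hmem
    omega
  have hqx : (px.concat hx.symm).IsPath := by
    rw [← Walk.isPath_reverse_iff, Walk.reverse_concat, Walk.cons_isPath_iff]
    exact ⟨hpx.reverse, by rwa [Walk.support_reverse, List.mem_reverse]⟩
  have hqy : (py.concat hy.symm).IsPath := by
    rw [← Walk.isPath_reverse_iff, Walk.reverse_concat, Walk.cons_isPath_iff]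
    exact ⟨hpy.reverse, by rwa [Walk.support_reverse, List.mem_reverse]⟩
  have h := hacyclic.path_unique (⟨px.concat hx.symm, hqx⟩ : G.Path s w) ⟨py.concat hy.symm, hqy⟩
  rw [Subtype.ext_iff] at h
  simp only at h
  have h2 := congrArg (fun q => Walk.getVert (Walk.reverse q) 1) h
  simp only [Walk.reverse_concat] at h2
  rwa [Walk.getVert_cons_succ, Walk.getVert_cons_succ, Walk.getVert_zero, Walk.getVert_zero] at h2


/-- Along any path in a tree whose only high-degree vertex is `s`, the distance
to `s` first strictly decreases then strictly increases, and an interior valley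
can only be `s` itself. -/
private lemma bn_valley (hconn : G.Connected) (hacyclic : G.IsAcyclic)
    (hdeg : ∀ v : V, v ≠ s → (G.neighborSet v).ncard ≤ 2) :
    ∀ {u v : V} (p : G.Walk u v), p.IsPath →
    ∃ n ≤ p.length,
      (∀ m ≤ n, G.dist s (p.getVert m) + m = G.dist s u) ∧
      (∀ m, n ≤ m → m ≤ p.length → G.dist s (p.getVert m) = G.dist s (p.getVert n) + (m - n)) ∧
      (0 < n → n < p.length → p.getVert n = s) := by
  intro u v p
  induction p with
  | nil =>
    intro _
    refine ⟨0, le_refl 0, ?_, ?_, by omega⟩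
    · intro m hm; interval_cases m; simp
    · intro m _ hm; simp only [Walk.length_nil, Nat.le_zero] at hm; subst hm; simp
  | @cons u b v h q ih =>
    intro hp
    have hq : q.IsPath := hp.of_cons
    have hunotq : u ∉ q.support := ((Walk.cons_isPath_iff h q).mp hp).2
    obtain ⟨n', hn'le, ih1, ih2, ih3⟩ := ih hq
    rcases bn_adj_dist_cases hconn hacyclic (s := s) h with hasc | hdesc
    · -- ascending first step : dist s b = dist s u + 1
      have hn0 : n' = 0 := by
        by_contra h0
        have h1 : 1 ≤ n' := Nat.one_le_iff_ne_zero.mpr h0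
        have hw2d := ih1 1 h1
        have hlen1 : 1 ≤ q.length := le_trans h1 hn'le
        have hadj : G.Adj b (q.getVert 1) := by
          have := q.adj_getVert_succ (i := 0) (by omega)
          simpa using this
        have hw2mem : q.getVert 1 ∈ q.support :=
          Walk.mem_support_iff_exists_getVert.mpr ⟨1, rfl, by omega⟩
        have hne : u ≠ q.getVert 1 := fun he => hunotq (he ▸ hw2mem)
        exact hne (bn_down_unique (s := s) hconn hacyclic h.symm hadj (by omega) (by omega))
      subst hn0
      refine ⟨0, Nat.zero_le _, ?_, ?_, by omega⟩
      · intro m hm; interval_cases m; simp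
      · intro m _ hm
        cases m with
        | zero => simp
        | succ m1 =>
          have h2 := ih2 m1 (Nat.zero_le _) (by simpa using hm)
          rw [Walk.getVert_cons_succ]
          simp only [Walk.getVert_zero] at h2 ⊢
          omega
    · -- descending first step : dist s u = dist s b + 1
      refine ⟨n' + 1, by simpa using Nat.succ_le_succ hn'le, ?_, ?_, ?_⟩
      · intro m hm
        cases m with
        | zero => simp
        | succ m1 =>
          have h1 := ih1 m1 (by omega)
          rw [Walk.getVert_cons_succ]
          omega
      · intro m hm hml
        cases m with
        | zero => omega
        | succ m1 =>
          have h2 := ih2 m1 (by omega) (by simpa using hml)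
          rw [Walk.getVert_cons_succ, Walk.getVert_cons_succ]
          omega
      · intro _ hlt
        rw [Walk.length_cons] at hlt
        rw [Walk.getVert_cons_succ]
        rcases Nat.eq_zero_or_pos n' with h0 | hpos
        · subst h0
          simp only [Walk.getVert_zero]
          by_contra hbs
          have hd1 : 1 ≤ G.dist s b := hconn.pos_dist_of_ne (Ne.symm hbs)
          have hqlen : 0 < q.length := by omega
          have hadj2 : G.Adj b (q.getVert 1) := by
            have := q.adj_getVert_succ (i := 0) hqlen
            simpa using this
          have hw2d : G.dist s (q.getVert 1) = G.dist s b + 1 := by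
            have := ih2 1 (Nat.zero_le _) hqlen
            simpa [q.getVert_zero] using this
          have hw2mem : q.getVert 1 ∈ q.support :=
            Walk.mem_support_iff_exists_getVert.mpr ⟨1, rfl, by omega⟩
          have hneu : u ≠ q.getVert 1 := fun he => hunotq (he ▸ hw2mem)
          obtain ⟨z, hz, hzd⟩ := bn_down_neighbor hconn hd1
          have hzu : z ≠ u := fun he => by rw [he] at hzd; omega
          have hzw2 : z ≠ q.getVert 1 := fun he => by rw [he] at hzd; omega
          have hsub : ({u, q.getVert 1, z} : Set V) ⊆ G.neighborSet b := by
            intro t ht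
            rcases ht with rfl | rfl | rfl
            · exact h.symm
            · exact hadj2
            · exact hz
          have h3 : ({u, q.getVert 1, z} : Set V).ncard = 3 :=
            Set.ncard_eq_three.mpr ⟨u, q.getVert 1, z, hneu, hzu.symm, hzw2.symm, rfl⟩
          have hle := Set.ncard_le_ncard hsub (Set.toFinite _)
          have := hdeg b hbs
          omega
        · exact ih3 hpos (by omega)

/-- Distance dichotomy in a spider tree: any two vertices are either joined
through `s` or aligned on a common leg. -/
private lemma bn_dich (hconn : G.Connected) (hacyclic : G.IsAcyclic)
    (hdeg : ∀ v : V, v ≠ s → (G.neighborSet v).ncard ≤ 2) (u v : V) :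
    G.dist u v = G.dist s u + G.dist s v ∨
    G.dist u v + G.dist s u = G.dist s v ∨
    G.dist u v + G.dist s v = G.dist s u := by
  obtain ⟨p, hp, hpl⟩ := hconn.exists_path_of_dist u v
  obtain ⟨n, hn, h1, h2, h3⟩ := bn_valley hconn hacyclic hdeg p hp
  rcases Nat.eq_zero_or_pos n with h0 | hpos
  · subst h0
    right; left
    have h4 := h2 p.length (Nat.zero_le _) le_rfl
    rw [Walk.getVert_length] at h4
    simp only [Walk.getVert_zero] at h4
    omega
  rcases eq_or_lt_of_le hn with hEnd | hlt
  · right; right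
    have h4 := h1 p.length (le_of_eq hEnd.symm)
    rw [Walk.getVert_length] at h4
    omega
  · have hs := h3 hpos hlt
    left
    have ha := h1 n le_rfl
    have hb := h2 p.length hn le_rfl
    rw [hs] at ha hb
    rw [Walk.getVert_length] at hb
    rw [SimpleGraph.dist_self] at ha hb
    omega

/-- Peel the last edge off a geodesic. -/
private lemma bn_step (hconn : G.Connected) {a v : V} {d : ℕ} (h : G.dist a v = d + 1) :
    ∃ u, G.Adj u v ∧ G.dist a u = d := by
  obtain ⟨q, hql⟩ := hconn.exists_walk_length_eq_dist v a
  cases q with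
  | nil =>
    rw [dist_comm] at h
    simp only [Walk.length_nil] at hql
    omega
  | cons hadj q' =>
    rename_i z
    refine ⟨z, hadj.symm, ?_⟩
    have h1 : G.dist a z ≤ q'.length := by rw [dist_comm]; exact dist_le q'
    have h2 : G.dist a v ≤ G.dist a z + 1 := by
      have := hconn.dist_triangle (u := a) (v := z) (w := v)
      rwa [dist_eq_one_iff_adj.mpr hadj.symm] at this
    have h3 : q'.length + 1 = G.dist v a := by simpa using hql
    rw [dist_comm] at h3
    omega

end Aux

private lemma bn_burned_eq {V : Type*} [Fintype V] {G : SimpleGraph V} (hconn : G.Connected)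
    {k : ℕ} (x : Fin k → V) :
    ∀ t, burnedSet G x t = {v | ∃ i : Fin k, G.dist (x i) v + (i : ℕ) + 1 ≤ t} := by
  intro t
  induction t with
  | zero =>
    ext v
    simp only [burnedSet, Set.mem_empty_iff_false, Set.mem_setOf_eq, false_iff, not_exists]
    intro i
    omega
  | succ t ih =>
    ext v
    simp only [burnedSet, ih, Set.mem_union, Set.mem_setOf_eq]
    constructor
    · rintro ((⟨i, hi⟩ | ⟨u, ⟨i, hi⟩, hadj⟩) | ⟨ht, rfl⟩)
      · exact ⟨i, by omega⟩
      · refine ⟨i, ?_⟩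
        have htri : G.dist (x i) v ≤ G.dist (x i) u + 1 := by
          have := hconn.dist_triangle (u := x i) (v := u) (w := v)
          rwa [SimpleGraph.dist_eq_one_iff_adj.mpr hadj] at this
        omega
      · exact ⟨⟨t, ht⟩, by simp [SimpleGraph.dist_self]⟩
    · rintro ⟨i, hi⟩
      by_cases hle : G.dist (x i) v + (i : ℕ) + 1 ≤ t
      · exact Or.inl (Or.inl ⟨i, hle⟩)
      · rcases Nat.eq_zero_or_pos (G.dist (x i) v) with h0 | hpos
        · have hvx : v = x i := ((hconn.dist_eq_zero_iff (u := x i) (v := v)).mp h0).symm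
          have hit : (i : ℕ) = t := by omega
          have htk : t < k := hit ▸ i.isLt
          refine Or.inr ⟨htk, ?_⟩
          rw [hvx]
          congr 1
          exact Fin.ext hit
        · obtain ⟨u, hadj, hdu⟩ :=
            bn_step hconn (show G.dist (x i) v = (G.dist (x i) v - 1) + 1 by omega)
          exact Or.inl (Or.inr ⟨u, ⟨i, by omega⟩, hadj⟩)

/-- A `k`-burning maximal spider graph has burning number exactly `k`.

`G` is a spider graph (tree with exactly one vertex `c` of degree ≥ 3) whose
vertex set decomposes into the ball `N_{k-1}[s]` (inducing a perfect spider of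
radius `k-1` centred at `s`, where `d(s,c) ≤ k-1`) and its complement, which is a
maximal path-forest: a path-forest admitting a partition into (connected) subpaths
of orders `1, 3, …, 2(k-1) - 1`. -/
theorem burningNumber_kBMS {V : Type*} [Fintype V]
    (G : SimpleGraph V) (c s : V) (k : ℕ)
    (hconn : G.Connected) (hacyclic : G.IsAcyclic)
    (hhead : 3 ≤ (G.neighborSet c).ncard)
    (hother : ∀ v : V, v ≠ c → (G.neighborSet v).ncard ≤ 2)
    (hsc : G.edist s c ≤ ((k - 1 : ℕ) : ℕ∞))
    -- the ball `N_{k-1}[s]` induces a perfect spider of radius `k-1` centred at `s`: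
    (hps_center : 3 ≤ {u : V | G.Adj s u ∧ G.edist s u ≤ ((k - 1 : ℕ) : ℕ∞)}.ncard)
    (hps_deg : ∀ v : V, G.edist s v ≤ ((k - 1 : ℕ) : ℕ∞) → v ≠ s →
      {u : V | G.Adj v u ∧ G.edist s u ≤ ((k - 1 : ℕ) : ℕ∞)}.ncard ≤ 2)
    (hps_leaf : ∀ v : V, G.edist s v ≤ ((k - 1 : ℕ) : ℕ∞) → v ≠ s →
      {u : V | G.Adj v u ∧ G.edist s u ≤ ((k - 1 : ℕ) : ℕ∞)}.ncard = 1 →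
      G.edist s v = ((k - 1 : ℕ) : ℕ∞))
    -- the complement is a path-forest …
    (hpf_deg : ∀ v : V, ((k - 1 : ℕ) : ℕ∞) < G.edist s v →
      {u : V | G.Adj v u ∧ ((k - 1 : ℕ) : ℕ∞) < G.edist s u}.ncard ≤ 2)
    -- … that is maximal: it partitions into subpaths of orders `1, 3, …, 2(k-1)-1`:
    (hmpf : ∃ A : Fin (k - 1) → Set V,
      (∀ i, A i ⊆ {v : V | ((k - 1 : ℕ) : ℕ∞) < G.edist s v}) ∧
      (∀ i j, i ≠ j → Disjoint (A i) (A j)) ∧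
      (⋃ i, A i) = {v : V | ((k - 1 : ℕ) : ℕ∞) < G.edist s v} ∧
      (∀ i, (A i).ncard = 2 * (i : ℕ) + 1) ∧
      (∀ i, (G.induce (A i)).Connected)) :
    burningNumber G = k := by
  classical
  have hre : ∀ u v : V, G.Reachable u v := fun u v => hconn u v
  have hedist : ∀ u v : V, G.edist u v = (G.dist u v : ℕ∞) := by
    intro u v
    rw [SimpleGraph.dist]
    exact (ENat.coe_toNat (SimpleGraph.edist_ne_top_iff_reachable.mpr (hre u v))).symm
  -- the hub of the spider is `s`
  have hsc' : s = c := by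
    by_contra hne
    have hsub : {u : V | G.Adj s u ∧ G.edist s u ≤ ((k - 1 : ℕ) : ℕ∞)} ⊆ G.neighborSet s :=
      fun u hu => hu.1
    have h1 := Set.ncard_le_ncard hsub (Set.toFinite _)
    have h2 := hother s hne
    omega
  subst hsc'
  have hdeg : ∀ v : V, v ≠ s → (G.neighborSet v).ncard ≤ 2 := fun v hv => hother v hv
  -- k is at least 2
  have hk2 : 2 ≤ k := by
    by_contra hk
    have hk1 : k - 1 = 0 := by omega
    rw [hk1] at hps_center
    have hemp : {u : V | G.Adj s u ∧ G.edist s u ≤ ((0 : ℕ) : ℕ∞)} = ∅ := by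
      ext u
      simp only [Set.mem_setOf_eq, Set.mem_empty_iff_false, iff_false, not_and]
      intro hadj hle
      have h0 : G.edist s u = 0 := le_antisymm (by exact_mod_cast hle) zero_le
      rw [SimpleGraph.edist_eq_zero_iff] at h0
      exact G.loopless.irrefl s (h0 ▸ hadj)
    rw [hemp] at hps_center
    simp at hps_center
  set K := k - 1 with hKdef
  have hK1 : 1 ≤ K := by omega
  have hkK : k = K + 1 := by omega
  set P : Set V := {v : V | K < G.dist s v} with hPdef
  have hPmem : ∀ v, v ∈ P ↔ K + 1 ≤ G.dist s v := by
    intro v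
    rw [hPdef]
    simp only [Set.mem_setOf_eq]
    omega
  have hPiff : ∀ v, ((K : ℕ) : ℕ∞) < G.edist s v ↔ v ∈ P := by
    intro v
    rw [hedist, hPdef]
    simp only [Set.mem_setOf_eq]
    exact_mod_cast Iff.rfl
  obtain ⟨A, hA1, hA2, hA3, hA4, hA5⟩ := hmpf
  have hA1' : ∀ i, A i ⊆ P := fun i v hv => (hPiff v).mp (hA1 i hv)
  have hA3' : (⋃ i, A i) = P := by
    rw [hA3]; ext v; exact hPiff v
  have key : ∀ u v : V, u ∈ P → v ∈ P → G.dist u v < 2 * K + 2 →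
      (G.dist u v + G.dist s u = G.dist s v ∨ G.dist u v + G.dist s v = G.dist s u) := by
    intro u v hu hv hlt
    rw [hPmem] at hu hv
    rcases bn_dich (s := s) hconn hacyclic hdeg u v with h | h | h
    · omega
    · exact Or.inl h
    · exact Or.inr h
  have keyeq : ∀ u v : V, u ∈ P → v ∈ P → G.dist u v < 2 * K + 2 →
      G.dist s u = G.dist s v → u = v := by
    intro u v hu hv hlt hd
    rcases key u v hu hv hlt with h | h
    · exact (hconn.dist_eq_zero_iff).mp (by omega)
    · exact (hconn.dist_eq_zero_iff).mp (by omega)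
  -- each block Aᵢ is a geodesic interval of depths, with a centre
  have hctr : ∀ i : Fin K, ∃ (m : V) (dm : ℕ), m ∈ A i ∧ G.dist s m = dm + (i : ℕ) ∧
      K + 1 ≤ dm ∧ (∀ v ∈ A i, G.dist m v ≤ (i : ℕ)) ∧
      (∀ t, dm ≤ t → t ≤ dm + 2 * (i : ℕ) → ∃ w ∈ A i, G.dist s w = t) := by
    intro i
    have hiK : (i : ℕ) < K := i.isLt
    have hAfin : (A i).Finite := Set.toFinite _
    have hAne : (A i).Nonempty := by
      apply Set.nonempty_of_ncard_ne_zero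
      rw [hA4]
      omega
    have hAP : ∀ v ∈ A i, K + 1 ≤ G.dist s v := fun v hv => (hPmem v).mp (hA1' i hv)
    have hpath : ∀ u v : V, u ∈ A i → v ∈ A i →
        ∃ p : G.Walk u v, p.IsPath ∧ ∀ w ∈ p.support, w ∈ A i := by
      intro u v hu hv
      have hr : (G.induce (A i)).Reachable ⟨u, hu⟩ ⟨v, hv⟩ := (hA5 i) ⟨u, hu⟩ ⟨v, hv⟩
      obtain ⟨w0⟩ := hr
      let f : G.induce (A i) →g G := ⟨Subtype.val, fun {a b} hab => hab⟩
      refine ⟨(w0.map f).bypass, Walk.bypass_isPath _, ?_⟩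
      intro w hw
      have hw2 := Walk.support_bypass_subset _ hw
      rw [Walk.support_map] at hw2
      obtain ⟨w', _, rfl⟩ := List.mem_map.mp hw2
      exact w'.2
    have hlenb : ∀ (u v : V) (p : G.Walk u v), p.IsPath → (∀ w ∈ p.support, w ∈ A i) →
        p.length ≤ 2 * (i : ℕ) := by
      intro u v p hp hsup
      have h1 : p.support.toFinset.card = p.length + 1 := by
        rw [List.toFinset_card_of_nodup hp.support_nodup, Walk.length_support]
      have h2 : p.support.toFinset ⊆ hAfin.toFinset := by
        intro w hw
        rw [Set.Finite.mem_toFinset]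
        exact hsup w (List.mem_toFinset.mp hw)
      have h3 := Finset.card_le_card h2
      have h4 : hAfin.toFinset.card = 2 * (i : ℕ) + 1 := by
        rw [← Set.ncard_eq_toFinset_card (A i) hAfin]
        exact hA4 i
      omega
    have hdista : ∀ u v : V, u ∈ A i → v ∈ A i → G.dist u v ≤ 2 * (i : ℕ) := by
      intro u v hu hv
      obtain ⟨p, hp, hsup⟩ := hpath u v hu hv
      exact le_trans (SimpleGraph.dist_le p) (hlenb u v p hp hsup)
    have hsmall : 2 * (i : ℕ) < 2 * K + 2 := by omega
    obtain ⟨u0, hu0A, hu0min⟩ := hAfin.toFinset.exists_min_image (fun v => G.dist s v)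
        (by rwa [Set.Finite.toFinset_nonempty])
    obtain ⟨u1, hu1A, hu1max⟩ := hAfin.toFinset.exists_max_image (fun v => G.dist s v)
        (by rwa [Set.Finite.toFinset_nonempty])
    rw [Set.Finite.mem_toFinset] at hu0A hu1A
    have hmin : ∀ v ∈ A i, G.dist s u0 ≤ G.dist s v := fun v hv =>
      hu0min v (hAfin.mem_toFinset.mpr hv)
    have hmax : ∀ v ∈ A i, G.dist s v ≤ G.dist s u1 := fun v hv =>
      hu1max v (hAfin.mem_toFinset.mpr hv)
    obtain ⟨p, hp, hsup⟩ := hpath u0 u1 hu0A hu1A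
    obtain ⟨n, hn, hv1, hv2, hv3⟩ := bn_valley hconn hacyclic hdeg p hp
    have hsupP : ∀ m ≤ p.length, K + 1 ≤ G.dist s (p.getVert m) := by
      intro m hm
      exact hAP _ (hsup _ (Walk.mem_support_iff_exists_getVert.mpr ⟨m, rfl, hm⟩))
    have hnotint : n = 0 ∨ n = p.length := by
      by_contra hni
      push_neg at hni
      have h1 : 0 < n := Nat.pos_of_ne_zero hni.1
      have h2 : n < p.length := lt_of_le_of_ne hn hni.2
      have hge := hsupP n hn
      rw [hv3 h1 h2, SimpleGraph.dist_self] at hge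
      omega
    have hd01le : G.dist s u0 ≤ G.dist s u1 := hmin u1 hu1A
    have hkey2 : G.dist s u1 = G.dist s u0 + p.length ∧
        ∀ t, G.dist s u0 ≤ t → t ≤ G.dist s u1 → ∃ w ∈ A i, G.dist s w = t := by
      rcases hnotint with h0 | hL
      · subst h0
        have hlen : ∀ m ≤ p.length, G.dist s (p.getVert m) = G.dist s u0 + m := by
          intro m hm
          have hh := hv2 m (Nat.zero_le _) hm
          simpa [Walk.getVert_zero] using hh
        have hlen1 : G.dist s u1 = G.dist s u0 + p.length := by
          have hh := hlen p.length le_rfl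
          rwa [Walk.getVert_length] at hh
        refine ⟨hlen1, ?_⟩
        intro t ht0 ht1
        refine ⟨p.getVert (t - G.dist s u0),
          hsup _ (Walk.mem_support_iff_exists_getVert.mpr ⟨t - G.dist s u0, rfl, by omega⟩), ?_⟩
        rw [hlen (t - G.dist s u0) (by omega)]
        omega
      · subst hL
        have hlen0 : p.length = 0 := by
          have hh := hv1 p.length le_rfl
          rw [Walk.getVert_length] at hh
          omega
        have hu01 : u0 = u1 := Walk.eq_of_length_eq_zero hlen0
        have hd01 : G.dist s u0 = G.dist s u1 := by rw [hu01]
        refine ⟨by omega, ?_⟩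
        intro t ht0 ht1
        exact ⟨u0, hu0A, by omega⟩
    obtain ⟨hlend, hatt⟩ := hkey2
    have hinj : Set.InjOn (fun v => G.dist s v) (A i) := by
      intro u hu v hv hd
      exact keyeq u v (hA1' i hu) (hA1' i hv) (lt_of_le_of_lt (hdista u v hu hv) hsmall) hd
    have himg : (fun v => G.dist s v) '' (A i) = Set.Icc (G.dist s u0) (G.dist s u1) := by
      apply Set.Subset.antisymm
      · rintro _ ⟨v, hv, rfl⟩
        exact ⟨hmin v hv, hmax v hv⟩
      · rintro t ⟨ht0, ht1⟩
        obtain ⟨w, hw, hwt⟩ := hatt t ht0 ht1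
        exact ⟨w, hw, hwt⟩
    have hcardA : (A i).ncard = G.dist s u1 - G.dist s u0 + 1 := by
      rw [← Set.ncard_image_of_injOn hinj, himg, ← Finset.coe_Icc, Set.ncard_coe_finset,
        Nat.card_Icc]
      omega
    have h2i : G.dist s u1 = G.dist s u0 + 2 * (i : ℕ) := by
      rw [hA4] at hcardA
      omega
    obtain ⟨m, hmA, hmd⟩ := hatt (G.dist s u0 + (i : ℕ)) (by omega) (by omega)
    refine ⟨m, G.dist s u0, hmA, by omega, hAP u0 hu0A, ?_, ?_⟩
    · intro v hv
      rcases key m v (hA1' i hmA) (hA1' i hv)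
          (lt_of_le_of_lt (hdista m v hmA hv) hsmall) with h | h
      · have := hmax v hv; omega
      · have := hmin v hv; omega
    · intro t ht0 ht1
      exact hatt t ht0 (by omega)
  choose ctr dmin hctr1 hctr2 hctr3 hctr4 hctr5 using hctr
  -- separation of centres
  have hsep : ∀ i i' : Fin K, (i : ℕ) < (i' : ℕ) →
      (i' : ℕ) - (i : ℕ) ≤ G.dist (ctr i') (ctr i) := by
    intro i i' hii
    by_contra hlt
    push_neg at hlt
    have hi'K : (i' : ℕ) < K := i'.isLt
    have hPi : ctr i ∈ P := hA1' i (hctr1 i)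
    have hPi' : ctr i' ∈ P := hA1' i' (hctr1 i')
    have hsmall : G.dist (ctr i') (ctr i) < 2 * K + 2 := by omega
    have hbounds : dmin i' ≤ G.dist s (ctr i) ∧
        G.dist s (ctr i) ≤ dmin i' + 2 * (i' : ℕ) := by
      have e2 := hctr2 i
      have e2' := hctr2 i'
      rcases key (ctr i') (ctr i) hPi' hPi hsmall with h | h <;> omega
    obtain ⟨w, hwA, hwd⟩ := hctr5 i' _ hbounds.1 hbounds.2
    have hdw : G.dist (ctr i') w ≤ (i' : ℕ) := hctr4 i' w hwA
    have htri : G.dist (ctr i) w ≤ G.dist (ctr i) (ctr i') + G.dist (ctr i') w :=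
      hconn.dist_triangle
    have hcomm : G.dist (ctr i) (ctr i') = G.dist (ctr i') (ctr i) := SimpleGraph.dist_comm
    have hsmall2 : G.dist (ctr i) w < 2 * K + 2 := by omega
    have heq : ctr i = w := keyeq (ctr i) w hPi (hA1' i' hwA) hsmall2 (by omega)
    have hdisj := hA2 i i' (by intro h; rw [h] at hii; omega)
    exact (Set.disjoint_left.mp hdisj (hctr1 i)) (heq ▸ hwA)
  -- counting lemmas for the lower bound
  have hcount : ∀ (x0 : V) (r : ℕ), r ≤ K →
      ({v | G.dist x0 v ≤ r} ∩ P).ncard ≤ 2 * r + 1 := by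
    intro x0 r hr
    set S := {v | G.dist x0 v ≤ r} ∩ P with hSdef
    have hSmem : ∀ v, v ∈ S → G.dist x0 v ≤ r ∧ v ∈ P := fun v hv => ⟨hv.1, hv.2⟩
    have hSdist : ∀ u v, u ∈ S → v ∈ S → G.dist u v ≤ 2 * r := by
      intro u v hu hv
      have h1 : G.dist u v ≤ G.dist u x0 + G.dist x0 v := hconn.dist_triangle
      have h2 : G.dist u x0 = G.dist x0 u := SimpleGraph.dist_comm
      have h3 := (hSmem u hu).1
      have h4 := (hSmem v hv).1
      omega
    rcases Set.eq_empty_or_nonempty S with hS | hS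
    · rw [hS]; simp
    have hSfin : S.Finite := Set.toFinite _
    obtain ⟨u0, hu0S, hu0min⟩ := hSfin.toFinset.exists_min_image (fun v => G.dist s v)
        (by rwa [Set.Finite.toFinset_nonempty])
    rw [Set.Finite.mem_toFinset] at hu0S
    have hmin : ∀ v ∈ S, G.dist s u0 ≤ G.dist s v := by
      intro v hv
      exact hu0min v (hSfin.mem_toFinset.mpr hv)
    have hinj : Set.InjOn (fun v => G.dist s v) S := by
      intro u hu v hv hd
      exact keyeq u v (hSmem u hu).2 (hSmem v hv).2
        (lt_of_le_of_lt (hSdist u v hu hv) (by omega)) hd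
    have himg : (fun v => G.dist s v) '' S ⊆
        Set.Icc (G.dist s u0) (G.dist s u0 + 2 * r) := by
      rintro _ ⟨v, hv, rfl⟩
      dsimp only
      refine ⟨hmin v hv, ?_⟩
      have hduv := hSdist u0 v hu0S hv
      rcases key u0 v hu0S.2 (hSmem v hv).2
          (lt_of_le_of_lt (hSdist u0 v hu0S hv) (by omega)) with h | h
      · omega
      · have := hmin v hv; omega
    have hcard : S.ncard = ((fun v => G.dist s v) '' S).ncard :=
      (Set.ncard_image_of_injOn hinj).symm
    have hle := Set.ncard_le_ncard himg (Set.finite_Icc _ _)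
    have hIcc : (Set.Icc (G.dist s u0) (G.dist s u0 + 2 * r)).ncard = 2 * r + 1 := by
      rw [← Finset.coe_Icc, Set.ncard_coe_finset, Nat.card_Icc]
      omega
    omega
  have hcount_s : ∀ (x0 : V) (r : ℕ), r ≤ K → G.dist x0 s ≤ r →
      ({v | G.dist x0 v ≤ r} ∩ P).ncard ≤ 2 * r := by
    intro x0 r hr hxs
    set S := {v | G.dist x0 v ≤ r} ∩ P with hSdef
    have hSmem : ∀ v, v ∈ S → G.dist x0 v ≤ r ∧ v ∈ P := fun v hv => ⟨hv.1, hv.2⟩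
    have hSdist : ∀ u v, u ∈ S → v ∈ S → G.dist u v ≤ 2 * r := by
      intro u v hu hv
      have h1 : G.dist u v ≤ G.dist u x0 + G.dist x0 v := hconn.dist_triangle
      have h2 : G.dist u x0 = G.dist x0 u := SimpleGraph.dist_comm
      have h3 := (hSmem u hu).1
      have h4 := (hSmem v hv).1
      omega
    have hinj : Set.InjOn (fun v => G.dist s v) S := by
      intro u hu v hv hd
      exact keyeq u v (hSmem u hu).2 (hSmem v hv).2
        (lt_of_le_of_lt (hSdist u v hu hv) (by omega)) hd
    have hx0s : G.dist s x0 ≤ r := by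
      rw [SimpleGraph.dist_comm]; exact hxs
    have himg : (fun v => G.dist s v) '' S ⊆ Set.Icc (K + 1) (2 * r) := by
      rintro _ ⟨v, hv, rfl⟩
      dsimp only
      have hvP := (hPmem v).mp (hSmem v hv).2
      refine ⟨hvP, ?_⟩
      have hd := (hSmem v hv).1
      rcases bn_dich (s := s) hconn hacyclic hdeg x0 v with h | h | h
      · omega
      · omega
      · omega
    have hcard : S.ncard = ((fun v => G.dist s v) '' S).ncard :=
      (Set.ncard_image_of_injOn hinj).symm
    have hle := Set.ncard_le_ncard himg (Set.finite_Icc _ _)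
    have hIcc : (Set.Icc (K + 1) (2 * r)).ncard = 2 * r - K := by
      rw [← Finset.coe_Icc, Set.ncard_coe_finset, Nat.card_Icc]
      omega
    omega
  have hsum_odd : ∀ n : ℕ, (Finset.range n).sum (fun j => 2 * j + 1) = n ^ 2 := by
    intro n
    induction n with
    | zero => simp
    | succ n ih => rw [Finset.sum_range_succ, ih]; ring
  have hPcard : P.ncard = K ^ 2 := by
    have hdisj : ∀ i ∈ (Finset.univ : Finset (Fin K)), ∀ j ∈ (Finset.univ : Finset (Fin K)),
        i ≠ j → Disjoint ((Set.toFinite (A i)).toFinset) ((Set.toFinite (A j)).toFinset) := by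
      intro i _ j _ hij
      rw [Set.Finite.disjoint_toFinset]
      exact hA2 i j hij
    have hPfin : P.Finite := Set.toFinite _
    have hun : hPfin.toFinset = Finset.univ.biUnion
        (fun i => (Set.toFinite (A i)).toFinset) := by
      ext v
      simp only [Set.Finite.mem_toFinset, Finset.mem_biUnion, Finset.mem_univ, true_and]
      rw [← hA3', Set.mem_iUnion]
    have hcard := congrArg Finset.card hun
    rw [Finset.card_biUnion hdisj] at hcard
    have hterm : ∀ i : Fin K, ((Set.toFinite (A i)).toFinset).card = 2 * (i : ℕ) + 1 := by
      intro i
      rw [← Set.ncard_eq_toFinset_card (A i)]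
      exact hA4 i
    rw [Finset.sum_congr rfl (fun i _ => hterm i)] at hcard
    rw [Set.ncard_eq_toFinset_card P hPfin, hcard,
      Fin.sum_univ_eq_sum_range (fun j => 2 * j + 1) K, hsum_odd]
  -- lower bound
  have hlower : ∀ m : ℕ, (∃ y : Fin m → V, IsBurningSeq G y) → k ≤ m := by
    intro m hm
    obtain ⟨y, hy⟩ := hm
    by_contra hmk
    push_neg at hmk
    have hmK : m ≤ K := by omega
    have hcover : ∀ v : V, ∃ i : Fin m, G.dist (y i) v + (i : ℕ) + 1 ≤ m := by
      intro v
      have h2 := hy.2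
      rw [bn_burned_eq hconn] at h2
      have hv : v ∈ Set.univ := Set.mem_univ v
      rw [← h2] at hv
      exact hv
    have hm1 : 1 ≤ m := (hcover s).elim fun i _ => i.pos
    set B : Fin m → Set V := fun i => {v | G.dist (y i) v ≤ m - 1 - (i : ℕ)} ∩ P with hBdef
    have hPsub : P ⊆ ⋃ i, B i := by
      intro v hv
      obtain ⟨i, hi⟩ := hcover v
      exact Set.mem_iUnion.mpr ⟨i, ⟨by simp only [Set.mem_setOf_eq]; omega, hv⟩⟩
    have hcard_le : P.ncard ≤ ∑ i : Fin m, (B i).ncard := by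
      have hPfin := Set.toFinite P
      have h1 : hPfin.toFinset ⊆
          Finset.univ.biUnion (fun i => (Set.toFinite (B i)).toFinset) := by
        intro v hv
        rw [Set.Finite.mem_toFinset] at hv
        obtain ⟨i, hi⟩ := Set.mem_iUnion.mp (hPsub hv)
        exact Finset.mem_biUnion.mpr ⟨i, Finset.mem_univ i,
          (Set.toFinite (B i)).mem_toFinset.mpr hi⟩
      have h2 := Finset.card_le_card h1
      have h3 := Finset.card_biUnion_le (s := (Finset.univ : Finset (Fin m)))
        (t := fun i => (Set.toFinite (B i)).toFinset)
      rw [Set.ncard_eq_toFinset_card P hPfin]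
      refine le_trans h2 (le_trans h3 ?_)
      apply Finset.sum_le_sum
      intro i _
      rw [← Set.ncard_eq_toFinset_card (B i)]
    obtain ⟨i0, hi0⟩ := hcover s
    have hB : ∀ i : Fin m, (B i).ncard ≤ 2 * (m - 1 - (i : ℕ)) + 1 := fun i =>
      hcount (y i) (m - 1 - (i : ℕ)) (by omega)
    have hB0 : (B i0).ncard ≤ 2 * (m - 1 - (i0 : ℕ)) := by
      apply hcount_s (y i0) (m - 1 - (i0 : ℕ)) (by omega)
      omega
    have hsum : ∑ i : Fin m, (2 * (m - 1 - (i : ℕ)) + 1) = m ^ 2 := by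
      rw [Fin.sum_univ_eq_sum_range (fun j => 2 * (m - 1 - j) + 1) m]
      rw [show (fun j => 2 * (m - 1 - j) + 1) = (fun j => (fun t => 2 * t + 1) (m - 1 - j)) from rfl]
      rw [Finset.sum_range_reflect (fun t => 2 * t + 1) m]
      exact hsum_odd m
    have hsum2 : (∑ i : Fin m, (B i).ncard) + 1 ≤ m ^ 2 := by
      have hdec : ∀ i : Fin m, (B i).ncard + (if i = i0 then 1 else 0) ≤
          2 * (m - 1 - (i : ℕ)) + 1 := by
        intro i
        by_cases h : i = i0
        · subst h
          rw [if_pos rfl]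
          omega
        · simp only [if_neg h]
          have := hB i
          omega
      calc (∑ i : Fin m, (B i).ncard) + 1
          = ∑ i : Fin m, ((B i).ncard + if i = i0 then 1 else 0) := by
            rw [Finset.sum_add_distrib, Finset.sum_ite_eq' Finset.univ i0 (fun _ => 1)]
            simp
        _ ≤ ∑ i : Fin m, (2 * (m - 1 - (i : ℕ)) + 1) := Finset.sum_le_sum (fun i _ => hdec i)
        _ = m ^ 2 := hsum
    have hm2 : m ^ 2 ≤ K ^ 2 := Nat.pow_le_pow_left hmK 2
    omega
  -- upper bound
  have hupper : ∃ x : Fin k → V, IsBurningSeq G x := by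
    have hkpos : 0 < k := by omega
    set idx : Fin k → Fin K := fun j => ⟨K - max 1 (j : ℕ), by omega⟩ with hidxdef
    have hidxval : ∀ j : Fin k, (j : ℕ) ≠ 0 → ((idx j : Fin K) : ℕ) = K - (j : ℕ) := by
      intro j hj
      rw [hidxdef]
      show K - max 1 (j : ℕ) = K - (j : ℕ)
      congr 1
      exact Nat.max_eq_right (by omega)
    set x : Fin k → V := fun j => if (j : ℕ) = 0 then s else ctr (idx j) with hxdef
    have hx0 : ∀ j : Fin k, (j : ℕ) = 0 → x j = s := by
      intro j hj
      rw [hxdef]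
      exact if_pos hj
    have hxj : ∀ j : Fin k, (j : ℕ) ≠ 0 → x j = ctr (idx j) := by
      intro j hj
      rw [hxdef]
      exact if_neg hj
    refine ⟨x, ?_, ?_⟩
    · -- sources are unburned when chosen
      intro j
      rw [bn_burned_eq hconn]
      simp only [Set.mem_setOf_eq, not_exists]
      intro j' hj'
      have hj'j : (j' : ℕ) < (j : ℕ) := by omega
      have hjne : (j : ℕ) ≠ 0 := by omega
      have hjK : (j : ℕ) ≤ K := by have := j.isLt; omega
      have hj'K : (j' : ℕ) ≤ K := by omega
      rw [hxj j hjne] at hj'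
      by_cases hj'0 : (j' : ℕ) = 0
      · rw [hx0 j' hj'0] at hj'
        have h2 := hctr2 (idx j)
        have h3 := hctr3 (idx j)
        omega
      · rw [hxj j' hj'0] at hj'
        have hvj := hidxval j hjne
        have hvj' := hidxval j' hj'0
        have hlt : ((idx j : Fin K) : ℕ) < ((idx j' : Fin K) : ℕ) := by omega
        have hs := hsep (idx j) (idx j') hlt
        omega
    · -- everything is burned after k rounds
      rw [bn_burned_eq hconn]
      ext v
      simp only [Set.mem_setOf_eq, Set.mem_univ, iff_true]
      by_cases hv : G.dist s v ≤ K
      · refine ⟨⟨0, hkpos⟩, ?_⟩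
        rw [hx0 ⟨0, hkpos⟩ rfl]
        show G.dist s v + (0 : ℕ) + 1 ≤ k
        omega
      · have hvP : v ∈ P := (hPmem v).mpr (by omega)
        rw [← hA3'] at hvP
        obtain ⟨i, hvAi⟩ := Set.mem_iUnion.mp hvP
        have hiK : (i : ℕ) < K := i.isLt
        refine ⟨⟨K - (i : ℕ), by omega⟩, ?_⟩
        have hjne : ((⟨K - (i : ℕ), by omega⟩ : Fin k) : ℕ) ≠ 0 := by
          show K - (i : ℕ) ≠ 0
          omega
        rw [hxj _ hjne]
        have hidxeq : idx ⟨K - (i : ℕ), by omega⟩ = i := by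
          apply Fin.ext
          rw [hidxval _ hjne]
          show K - (K - (i : ℕ)) = (i : ℕ)
          omega
        rw [hidxeq]
        have h4 := hctr4 i v hvAi
        show G.dist (ctr i) v + (K - (i : ℕ)) + 1 ≤ k
        omega
  have hkmem : k ∈ {k' : ℕ | ∃ x : Fin k' → V, IsBurningSeq G x} := hupper
  refine le_antisymm (Nat.sInf_le hkmem) (le_csInf ⟨k, hkmem⟩ ?_)
  intro m hm
  exact hlower m hm
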